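/- arXiv:2602.01943 — 3 statements merged into one kernel-verified Lean document; each statement's English description precedes it below -/
import Mathlib

section
/- Let Ψ₀, Φ, Ψ be unit vectors in a complex inner product space, Θ := arccos|⟨Ψ₀,Ψ⟩|, and F[x,y] := |⟨x,y⟩|². Then |F[Φ,Ψ] − F[Φ,Ψ₀]| ≤ sinΘ. -/
-- purely real arithmetic core
lemma fidelity_arith (t f a s g : ℝ) (ht0 : 0 ≤ t) (hf0 : 0 ≤ f) (ha0 : 0 ≤ a)
    (hs0 : 0 ≤ s) (hg0 : 0 ≤ g)
    (hs2 : s ^ 2 = 1 - t ^ 2) (hg2 : g ^ 2 = 1 - f ^ 2)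
    (hineq : a ≤ t * f + g * s) : a ^ 2 - f ^ 2 ≤ s := by
  have hX0 : 0 ≤ t * f + g * s :=
    add_nonneg (mul_nonneg ht0 hf0) (mul_nonneg hg0 hs0)
  have h2 : a ^ 2 ≤ (t * f + g * s) ^ 2 := by
    have := mul_le_mul hineq hineq ha0 hX0
    nlinarith [this]
  have h4f : f ^ 2 * g ^ 2 = f ^ 2 * (1 - f ^ 2) := by rw [hg2]
  have key1 : s * (1 - 2 * f ^ 2) + 2 * t * f * g ≤ 1 := by
    nlinarith [sq_nonneg (s - (1 - 2 * f ^ 2)), sq_nonneg (t - 2 * f * g), hs2, h4f]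
  have h3 : (t * f + g * s) ^ 2 - f ^ 2 = s * (s * (1 - 2 * f ^ 2) + 2 * t * f * g) := by
    linear_combination f ^ 2 * hs2 + s ^ 2 * hg2
  have h5 : s * (s * (1 - 2 * f ^ 2) + 2 * t * f * g) ≤ s * 1 :=
    mul_le_mul_of_nonneg_left key1 hs0
  nlinarith [h2, h3, h5]

lemma key {E : Type*} [NormedAddCommGroup E] [InnerProductSpace ℂ E]
    (Ψ₀ Φ Ψ : E) (h₀ : ‖Ψ₀‖ = 1) (hΦ : ‖Φ‖ = 1) (hΨ : ‖Ψ‖ = 1) :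
    ‖(inner ℂ Φ Ψ : ℂ)‖ ^ 2 - ‖(inner ℂ Φ Ψ₀ : ℂ)‖ ^ 2
      ≤ Real.sqrt (1 - ‖(inner ℂ Ψ₀ Ψ : ℂ)‖ ^ 2) := by
  have hΨ₀self : (inner ℂ Ψ₀ Ψ₀ : ℂ) = 1 := by
    rw [inner_self_eq_norm_sq_to_K, h₀]; norm_num
  set c : ℂ := (inner ℂ Ψ₀ Ψ : ℂ) with hc
  set b : ℂ := (inner ℂ Ψ₀ Φ : ℂ) with hb
  have hwo : (inner ℂ Ψ₀ (Ψ - c • Ψ₀) : ℂ) = 0 := by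
    rw [inner_sub_right, inner_smul_right, hΨ₀self, ← hc]; ring
  have hre : ∀ z : ℂ, RCLike.re (z * (starRingEnd ℂ) z) = ‖z‖ ^ 2 := by
    intro z
    rw [Complex.mul_conj]
    simp [Complex.normSq_eq_norm_sq, ← Complex.ofReal_pow]
  have hwn : ‖Ψ - c • Ψ₀‖ ^ 2 = 1 - ‖c‖ ^ 2 := by
    have h0 := @norm_sub_sq ℂ E _ _ _ Ψ (c • Ψ₀)
    have h1 : (inner ℂ Ψ (c • Ψ₀) : ℂ) = c * (starRingEnd ℂ) c := by
      rw [inner_smul_right, ← inner_conj_symm, ← hc]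
    rw [h1, hre] at h0
    rw [h0, norm_smul, hΨ, h₀]; ring
  have hΦn : ‖Φ - b • Ψ₀‖ ^ 2 = 1 - ‖b‖ ^ 2 := by
    have h0 := @norm_sub_sq ℂ E _ _ _ Φ (b • Ψ₀)
    have h1 : (inner ℂ Φ (b • Ψ₀) : ℂ) = b * (starRingEnd ℂ) b := by
      rw [inner_smul_right, ← inner_conj_symm, ← hb]
    rw [h1, hre] at h0
    rw [h0, norm_smul, hΦ, h₀]; ring
  have hdec : (inner ℂ Φ Ψ : ℂ) = c * inner ℂ Φ Ψ₀ + inner ℂ (Φ - b • Ψ₀) (Ψ - c • Ψ₀) := by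
    have h3 : (inner ℂ Φ (Ψ - c • Ψ₀) : ℂ) = inner ℂ (Φ - b • Ψ₀) (Ψ - c • Ψ₀) := by
      rw [inner_sub_left, inner_smul_left, hwo]; ring
    have h4 : (inner ℂ Φ Ψ : ℂ) = inner ℂ Φ (Ψ - c • Ψ₀) + c * inner ℂ Φ Ψ₀ := by
      rw [inner_sub_right, inner_smul_right]; ring
    rw [h4, h3]; ring
  have hfb : ‖(inner ℂ Φ Ψ₀ : ℂ)‖ = ‖b‖ := by
    rw [hb]; exact norm_inner_symm Φ Ψ₀
  have ht1 : ‖c‖ ≤ 1 := by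
    have := norm_inner_le_norm (𝕜 := ℂ) Ψ₀ Ψ
    rw [h₀, hΨ] at this; simpa [← hc] using this
  have hf1 : ‖b‖ ≤ 1 := by
    have := norm_inner_le_norm (𝕜 := ℂ) Ψ₀ Φ
    rw [h₀, hΦ] at this; simpa [← hb] using this
  have hwnorm : ‖Ψ - c • Ψ₀‖ = Real.sqrt (1 - ‖c‖ ^ 2) := by
    rw [← hwn, Real.sqrt_sq (norm_nonneg _)]
  have hΦnorm : ‖Φ - b • Ψ₀‖ = Real.sqrt (1 - ‖b‖ ^ 2) := by
    rw [← hΦn, Real.sqrt_sq (norm_nonneg _)]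
  have hineq : ‖(inner ℂ Φ Ψ : ℂ)‖ ≤ ‖c‖ * ‖b‖
      + Real.sqrt (1 - ‖b‖ ^ 2) * Real.sqrt (1 - ‖c‖ ^ 2) := by
    calc ‖(inner ℂ Φ Ψ : ℂ)‖
        = ‖c * inner ℂ Φ Ψ₀ + (inner ℂ (Φ - b • Ψ₀) (Ψ - c • Ψ₀) : ℂ)‖ := by rw [hdec]
      _ ≤ ‖c * (inner ℂ Φ Ψ₀ : ℂ)‖ + ‖(inner ℂ (Φ - b • Ψ₀) (Ψ - c • Ψ₀) : ℂ)‖ :=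
          norm_add_le _ _
      _ ≤ ‖c‖ * ‖b‖ + ‖Φ - b • Ψ₀‖ * ‖Ψ - c • Ψ₀‖ := by
          rw [norm_mul, hfb]
          exact add_le_add_right (norm_inner_le_norm (𝕜 := ℂ) (Φ - b • Ψ₀) (Ψ - c • Ψ₀)) _
      _ = ‖c‖ * ‖b‖ + Real.sqrt (1 - ‖b‖ ^ 2) * Real.sqrt (1 - ‖c‖ ^ 2) := by
          rw [hwnorm, hΦnorm]
  rw [hfb]
  exact fidelity_arith ‖c‖ ‖b‖ ‖(inner ℂ Φ Ψ : ℂ)‖ _ _ (norm_nonneg _) (norm_nonneg _)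
    (norm_nonneg _) (Real.sqrt_nonneg _) (Real.sqrt_nonneg _)
    (Real.sq_sqrt (by nlinarith)) (Real.sq_sqrt (by nlinarith)) hineq

theorem fidelity_bound_simple {E : Type*} [NormedAddCommGroup E] [InnerProductSpace ℂ E]
    (Ψ₀ Φ Ψ : E) (h₀ : ‖Ψ₀‖ = 1) (hΦ : ‖Φ‖ = 1) (hΨ : ‖Ψ‖ = 1) :
    |‖(inner ℂ Φ Ψ : ℂ)‖ ^ 2 - ‖(inner ℂ Φ Ψ₀ : ℂ)‖ ^ 2|
      ≤ Real.sin (Real.arccos ‖(inner ℂ Ψ₀ Ψ : ℂ)‖) := by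
  have hsym : ‖(inner ℂ Ψ Ψ₀ : ℂ)‖ = ‖(inner ℂ Ψ₀ Ψ : ℂ)‖ := norm_inner_symm Ψ Ψ₀
  have h1 := key Ψ₀ Φ Ψ h₀ hΦ hΨ
  have h2 := key Ψ Φ Ψ₀ hΨ hΦ h₀
  rw [hsym] at h2
  rw [Real.sin_arccos, abs_sub_le_iff]
  exact ⟨h1, h2⟩
end

section
/- Let H₀ be a Hermitian matrix with orthonormal eigenbasis |E_n⟩, eigenvalues E_n, and Gibbs weights p_n = e^{−βE_n}. For any Hermitian V with the eigenvalue nondegeneracy needed for first-order perturbation theory, the function S(λ) := Tr(ρ₀(β) σ_λ(β)), where σ_λ(β) = (1/Z₀(β))Σ_n p_n |E_n(λ)⟩⟨E_n(λ)| and |E_n(λ)⟩ are eigenvectors of H₀ + λV, satisfies S'(0) = 0 and S''(0) = −(1/Z₀(β)²) Σ_{m≠n} (p_m − p_n)² |⟨E_m|V|E_n⟩|² / (E_m − E_n)². -/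
open Matrix Filter Topology

lemma hasDerivAt_re' {g : ℝ → ℂ} {g' : ℂ} {t : ℝ} (h : HasDerivAt g g' t) :
    HasDerivAt (fun s => (g s).re) g'.re t :=
  Complex.reCLM.hasFDerivAt.comp_hasDerivAt t h

lemma hasDerivAt_im' {g : ℝ → ℂ} {g' : ℂ} {t : ℝ} (h : HasDerivAt g g' t) :
    HasDerivAt (fun s => (g s).im) g'.im t :=
  Complex.imCLM.hasFDerivAt.comp_hasDerivAt t h

lemma norm_sq_eq_re_im (z : ℂ) : ‖z‖^2 = z.re^2 + z.im^2 := by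
  rw [Complex.sq_norm, Complex.normSq_apply]; ring

lemma hasDerivAt_normsq {g : ℝ → ℂ} {g' : ℂ} {t : ℝ} (h : HasDerivAt g g' t) :
    HasDerivAt (fun s => ‖g s‖^2) (2 * ((g t).re * g'.re + (g t).im * g'.im)) t := by
  simp only [norm_sq_eq_re_im]
  have := (((hasDerivAt_re' h).mul (hasDerivAt_re' h)).add
    ((hasDerivAt_im' h).mul (hasDerivAt_im' h)))
  have hfun : (fun s => (g s).re ^ 2 + (g s).im ^ 2) = ((fun s => (g s).re) * fun s => (g s).re)
      + (fun s => (g s).im) * fun s => (g s).im := by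
    funext s; simp only [Pi.add_apply, Pi.mul_apply]; ring
  rw [hfun]
  exact this.congr_deriv (by ring)

theorem thermal_overlap_perturbation {d : ℕ}
    (H₀ V : Matrix (Fin d) (Fin d) ℂ) (hH : H₀.IsHermitian) (hV : V.IsHermitian)
    (E : Fin d → ℝ) (hsimple : ∀ m n, E m = E n → m = n)
    (v : Fin d → (Fin d → ℂ))
    (hortho : ∀ m n, star (v m) ⬝ᵥ v n = if m = n then 1 else 0)
    (heig : ∀ n, H₀.mulVec (v n) = (E n : ℂ) • v n)
    (w : ℝ → Fin d → (Fin d → ℂ)) (ε : ℝ → Fin d → ℝ)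
    (hw0 : ∀ n, w 0 n = v n) (hε0 : ∀ n, ε 0 n = E n)
    (hwnorm : ∀ t n, star (w t n) ⬝ᵥ w t n = 1)
    (hweig : ∀ (t : ℝ) (n : Fin d), (H₀ + (t : ℂ) • V).mulVec (w t n) = (ε t n : ℂ) • w t n)
    (hsmooth : ∀ n, ContDiff ℝ 2 (fun t => w t n))
    (β Z : ℝ) (hZ : Z = ∑ n, Real.exp (-β * E n))
    (S : ℝ → ℝ)
    (hS : ∀ t, S t = (1 / Z ^ 2) * ∑ m, ∑ n,
        Real.exp (-β * E m) * Real.exp (-β * E n) * ‖star (v m) ⬝ᵥ w t n‖ ^ 2) :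
    deriv S 0 = 0 ∧
    deriv (deriv S) 0 = -(1 / Z ^ 2) * ∑ m, ∑ n,
        (if m = n then 0 else
          (Real.exp (-β * E m) - Real.exp (-β * E n)) ^ 2
            * ‖star (v m) ⬝ᵥ V.mulVec (v n)‖ ^ 2 / (E m - E n) ^ 2) := by
  -- abbreviations
  set p : Fin d → ℝ := fun n => Real.exp (-β * E n) with hp
  set f : Fin d → Fin d → ℝ → ℂ := fun m n t => star (v m) ⬝ᵥ w t n with hf
  -- coordinate smoothness
  have hcw : ∀ n i, ContDiff ℝ 2 (fun t => w t n i) := fun n i => contDiff_pi.mp (hsmooth n) i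
  have hcont : ∀ n i, Continuous (fun t => w t n i) := fun n i => (hcw n i).continuous
  set d1 : Fin d → Fin d → ℝ → ℂ := fun n i => deriv (fun t => w t n i) with hd1def
  have hd1 : ∀ n i (t : ℝ), HasDerivAt (fun t => w t n i) (d1 n i t) t :=
    fun n i t => (((hcw n i).differentiable (by norm_num)) t).hasDerivAt
  have hcd1 : ∀ n i, ContDiff ℝ 1 (d1 n i) := by
    intro n i
    have h2 : ContDiff ℝ ((1:ℕ) + 1) (fun t => w t n i) := by exact_mod_cast hcw n i
    exact (contDiff_succ_iff_deriv.mp h2).2.2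
  have hd2 : ∀ n i (t : ℝ), HasDerivAt (d1 n i) (deriv (d1 n i) t) t :=
    fun n i t => (((hcd1 n i).differentiable one_ne_zero) t).hasDerivAt
  -- f as coordinate sum
  have hfeq : ∀ m n t, f m n t = ∑ i, star (v m i) * w t n i := by
    intro m n t; simp [hf, dotProduct]
  -- first derivative of f
  set F1 : Fin d → Fin d → ℝ → ℂ := fun m n t => ∑ i, star (v m i) * d1 n i t with hF1def
  have hfd : ∀ m n (t : ℝ), HasDerivAt (f m n) (F1 m n t) t := by
    intro m n t
    have : HasDerivAt (fun t => ∑ i, star (v m i) * w t n i) (∑ i, star (v m i) * d1 n i t) t :=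
      HasDerivAt.fun_sum (fun i _ => (hd1 n i t).const_mul (star (v m i)))
    exact (funext (hfeq m n) : f m n = _) ▸ this
  -- second derivative of f
  set F2 : Fin d → Fin d → ℝ → ℂ := fun m n t => ∑ i, star (v m i) * deriv (d1 n i) t with hF2def
  have hfd2 : ∀ m n (t : ℝ), HasDerivAt (F1 m n) (F2 m n t) t := by
    intro m n t
    exact HasDerivAt.fun_sum (fun i _ => (hd2 n i t).const_mul (star (v m i)))
  set a : Fin d → Fin d → ℂ := fun m n => F1 m n 0 with hadef
  set b : Fin d → Fin d → ℂ := fun m n => F2 m n 0 with hbdef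
  -- value at 0
  have hf0 : ∀ m n, f m n 0 = if m = n then 1 else 0 := by
    intro m n; simp only [hf]; rw [hw0]; exact hortho m n
  -- Parseval
  have hpars : ∀ x : Fin d → ℂ, ∑ m, ‖star (v m) ⬝ᵥ x‖^2 = (star x ⬝ᵥ x).re := by
    intro x
    set U : Matrix (Fin d) (Fin d) ℂ := Matrix.of (fun m i => star (v m i)) with hU
    have hUU : U * Uᴴ = 1 := by
      ext m n
      simp only [Matrix.mul_apply, Matrix.conjTranspose_apply, hU, Matrix.of_apply,
        Matrix.one_apply, star_star]
      have := hortho m n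
      simpa [dotProduct] using this
    have hU'U : Uᴴ * U = 1 := mul_eq_one_comm.mp hUU
    have hcoord : ∀ m, star (v m) ⬝ᵥ x = (U *ᵥ x) m := by
      intro m; simp [Matrix.mulVec, dotProduct, hU]
    have key : star (U *ᵥ x) ⬝ᵥ (U *ᵥ x) = star x ⬝ᵥ x := by
      rw [star_mulVec, dotProduct_mulVec, vecMul_vecMul, hU'U, vecMul_one]
    have expand : ∀ u : Fin d → ℂ, (star u ⬝ᵥ u).re = ∑ m, ‖u m‖^2 := by
      intro u
      rw [dotProduct, Complex.re_sum]
      congr 1; funext m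
      simp only [Pi.star_apply]
      simp [Complex.star_def, Complex.mul_re, Complex.sq_norm,
        Complex.normSq_apply]
    rw [← key, expand]
    simp only [hcoord]
  -- a and b as dot products
  have hay : ∀ m n, a m n = star (v m) ⬝ᵥ (fun i => d1 n i 0) := by
    intro m n; simp [hadef, hF1def, dotProduct]
  have hby : ∀ m n, b m n = star (v m) ⬝ᵥ (fun i => deriv (d1 n i) 0) := by
    intro m n; simp [hbdef, hF2def, dotProduct]
  -- normalization identities
  have hnorm_ids : ∀ n : Fin d,
      (∑ i, (star (d1 n i 0) * v n i + star (v n i) * d1 n i 0) = 0) ∧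
      (∑ i, ((star (deriv (d1 n i) 0) * v n i + star (d1 n i 0) * d1 n i 0) +
        (star (d1 n i 0) * d1 n i 0 + star (v n i) * deriv (d1 n i) 0)) = 0) := by
    intro n
    set Q : ℝ → ℂ := fun t => ∑ i, (star (d1 n i t) * w t n i + star (w t n i) * d1 n i t)
      with hQ
    have hPQ : ∀ t, HasDerivAt (fun s => ∑ i, star (w s n i) * w s n i) (Q t) t := by
      intro t
      exact HasDerivAt.fun_sum fun i _ => ((hd1 n i t).star.mul (hd1 n i t))
    have hPconst : (fun s => ∑ i, star (w s n i) * w s n i) = fun _ => (1:ℂ) := by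
      funext s
      have := hwnorm s n
      simpa [dotProduct] using this
    have hQ0 : ∀ t, Q t = 0 := by
      intro t
      have h1 : HasDerivAt (fun s => ∑ i, star (w s n i) * w s n i) 0 t := by
        rw [hPconst]; exact hasDerivAt_const t 1
      exact (hPQ t).unique h1
    have first : ∑ i, (star (d1 n i 0) * v n i + star (v n i) * d1 n i 0) = 0 := by
      have := hQ0 0
      simp only [hQ] at this
      rw [hw0] at this
      exact this
    refine ⟨first, ?_⟩
    have hQd : HasDerivAt Q
        (∑ i, ((star (deriv (d1 n i) 0) * w 0 n i + star (d1 n i 0) * d1 n i 0) +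
          (star (d1 n i 0) * d1 n i 0 + star (w 0 n i) * deriv (d1 n i) 0))) 0 := by
      apply HasDerivAt.fun_sum; intro i _
      exact ((hd2 n i 0).star.mul (hd1 n i 0)).add ((hd1 n i 0).star.mul (hd2 n i 0))
    have hQzero : HasDerivAt Q 0 0 := by
      have : Q = fun _ => (0:ℂ) := funext hQ0
      rw [this]; exact hasDerivAt_const 0 0
    have h2 := hQd.unique hQzero
    rw [hw0] at h2
    rw [h2]
  have hare : ∀ n, (a n n).re = 0 := by
    intro n
    have h1 := (hnorm_ids n).1
    have h2 : star (a n n) + a n n = 0 := by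
      rw [hay]
      simp only [dotProduct, Pi.star_apply, star_sum, star_mul', star_star]
      rw [← Finset.sum_add_distrib, ← h1]
      exact Finset.sum_congr rfl fun i _ => by ring
    have h3 := congrArg Complex.re h2
    simp only [Complex.add_re, Complex.conj_re, Complex.zero_re] at h3
    have : (star (a n n)).re = (a n n).re := Complex.conj_re _
    rw [this] at h3
    linarith
  have hbre : ∀ n, (b n n).re = -∑ m, ‖a m n‖^2 := by
    intro n
    have h1 := (hnorm_ids n).2
    set y : Fin d → ℂ := fun i => d1 n i 0 with hy
    have h2 : star (b n n) + b n n + 2 * (star y ⬝ᵥ y) = 0 := by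
      rw [hby]
      simp only [dotProduct, Pi.star_apply, star_sum, star_mul', star_star, Finset.mul_sum]
      rw [← Finset.sum_add_distrib, ← Finset.sum_add_distrib, ← h1]
      exact Finset.sum_congr rfl fun i _ => by simp only [hy]; ring
    have h3 := congrArg Complex.re h2
    simp only [Complex.add_re, Complex.conj_re, Complex.zero_re, Complex.mul_re] at h3
    have hre : (star (b n n)).re = (b n n).re := Complex.conj_re _
    rw [hre] at h3
    have hp2 : ∑ m, ‖a m n‖^2 = (star y ⬝ᵥ y).re := by
      rw [← hpars y]
      exact Finset.sum_congr rfl fun m _ => by rw [hay]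
    rw [hp2]
    have h2re : ((2:ℂ)).re = 2 := by norm_num
    have h2im : ((2:ℂ)).im = 0 := by norm_num
    rw [h2re, h2im] at h3
    linarith
  -- off-diagonal first-order perturbation formula
  have key1 : ∀ m n (t : ℝ), ((E m :ℂ) - (ε t n:ℂ)) * f m n t
      = -(t:ℂ) * (star (v m) ⬝ᵥ V.mulVec (w t n)) := by
    intro m n t
    have h := congrArg (fun x => star (v m) ⬝ᵥ x) (hweig t n)
    simp only [add_mulVec, smul_mulVec, dotProduct_add, dotProduct_smul] at h
    have hH0 : star (v m) ⬝ᵥ H₀ *ᵥ w t n = (E m:ℂ) * (star (v m) ⬝ᵥ w t n) := by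
      rw [dotProduct_mulVec]
      have h2 : star (v m) ᵥ* H₀ = (E m:ℂ) • star (v m) := by
        conv_lhs => rw [← hH.eq]
        rw [← star_mulVec, heig m]
        simp [star_smul]
      rw [h2, smul_dotProduct, smul_eq_mul]
    rw [hH0, smul_eq_mul, smul_eq_mul] at h
    simp only [hf]
    linear_combination h
  have hεt : ∀ n, Tendsto (fun t => ((ε t n : ℝ):ℂ)) (𝓝 0) (𝓝 ((E n : ℝ):ℂ)) := by
    intro n
    have hfun : (fun t => ((ε t n : ℝ):ℂ)) =
        fun t => star (w t n) ⬝ᵥ ((H₀ + (t:ℂ) • V).mulVec (w t n)) := by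
      funext t
      rw [hweig t n, dotProduct_smul, hwnorm t n, smul_eq_mul, mul_one]
    rw [hfun]
    have hc : Continuous (fun t => star (w t n) ⬝ᵥ ((H₀ + (t:ℂ) • V).mulVec (w t n))) := by
      simp only [dotProduct, Matrix.mulVec, Matrix.add_apply, Matrix.smul_apply, Pi.star_apply]
      apply continuous_finset_sum; intro i _
      apply Continuous.mul
      · exact (hcont n i).star
      · apply continuous_finset_sum; intro j _
        exact ((continuous_const.add (Complex.continuous_ofReal.mul continuous_const)).mul
          (hcont n j))
    have := hc.tendsto 0
    convert this using 2
    rw [hweig 0 n, dotProduct_smul, hwnorm 0 n, smul_eq_mul, mul_one, hε0]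
  have hgt : ∀ m n, Tendsto (fun t => star (v m) ⬝ᵥ V.mulVec (w t n)) (𝓝 0)
      (𝓝 (star (v m) ⬝ᵥ V.mulVec (v n))) := by
    intro m n
    have hc : Continuous (fun t => star (v m) ⬝ᵥ V.mulVec (w t n)) := by
      simp only [dotProduct, Matrix.mulVec, Pi.star_apply]
      apply continuous_finset_sum; intro i _
      apply Continuous.mul continuous_const
      apply continuous_finset_sum; intro j _
      exact continuous_const.mul (hcont n j)
    have := hc.tendsto 0
    rw [hw0] at this
    exact this
  have ha_val : ∀ m n, m ≠ n →
      a m n = (star (v m) ⬝ᵥ V.mulVec (v n)) / ((E n :ℂ) - (E m :ℂ)) := by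
    intro m n hmn
    have hEmn : E m ≠ E n := fun h => hmn (hsimple m n h)
    have hslope : Tendsto (slope (f m n) 0) (𝓝[≠] 0) (𝓝 (a m n)) :=
      hasDerivAt_iff_tendsto_slope.mp (hfd m n 0)
    have hfmn0 : f m n 0 = 0 := by rw [hf0]; simp [hmn]
    have T2 : Tendsto (fun t => ((E m:ℂ) - (ε t n:ℂ)) * slope (f m n) 0 t) (𝓝[≠] 0)
        (𝓝 (((E m:ℂ) - (E n:ℂ)) * a m n)) :=
      ((tendsto_const_nhds.sub (hεt n)).mono_left nhdsWithin_le_nhds).mul hslope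
    have heq : ∀ t : ℝ, t ≠ 0 → ((E m:ℂ) - (ε t n:ℂ)) * slope (f m n) 0 t
        = -(star (v m) ⬝ᵥ V.mulVec (w t n)) := by
      intro t ht
      have htc : (t:ℂ) ≠ 0 := Complex.ofReal_ne_zero.mpr ht
      have hs : slope (f m n) 0 t = ((t:ℂ))⁻¹ * f m n t := by
        rw [slope_def_module, hfmn0, sub_zero, sub_zero, Complex.real_smul,
          Complex.ofReal_inv]
      rw [hs]
      have hk := key1 m n t
      field_simp
      linear_combination hk
    have T3 : Tendsto (fun t => ((E m:ℂ) - (ε t n:ℂ)) * slope (f m n) 0 t) (𝓝[≠] 0)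
        (𝓝 (-(star (v m) ⬝ᵥ V.mulVec (v n)))) := by
      apply Tendsto.congr' _ (((hgt m n).neg).mono_left nhdsWithin_le_nhds)
      filter_upwards [self_mem_nhdsWithin] with t ht
      exact (heq t ht).symm
    have huniq : ((E m:ℂ) - (E n:ℂ)) * a m n = -(star (v m) ⬝ᵥ V.mulVec (v n)) :=
      tendsto_nhds_unique T2 T3
    have hne : ((E n:ℂ) - (E m:ℂ)) ≠ 0 := by
      intro h
      apply hEmn
      have := sub_eq_zero.mp h
      exact_mod_cast this.symm
    field_simp
    linear_combination -huniq
  have ha_off : ∀ m n, m ≠ n →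
      ‖a m n‖^2 = ‖star (v m) ⬝ᵥ V.mulVec (v n)‖^2 / (E m - E n)^2 := by
    intro m n hmn
    rw [ha_val m n hmn, norm_div, div_pow]
    congr 1
    rw [show ((E n:ℂ) - (E m:ℂ)) = ((E n - E m : ℝ):ℂ) by push_cast; ring,
      Complex.norm_real]
    rw [Real.norm_eq_abs, sq_abs]; ring
  -- derivative of S
  set G : ℝ → ℝ := fun t => (1 / Z ^ 2) * ∑ m, ∑ n, p m * p n *
      (2 * ((f m n t).re * (F1 m n t).re + (f m n t).im * (F1 m n t).im)) with hGdef
  have hSfun : S = fun t => (1 / Z ^ 2) * ∑ m, ∑ n, p m * p n * ‖f m n t‖^2 := by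
    funext t; rw [hS t]
  have hSd : ∀ t, HasDerivAt S (G t) t := by
    intro t
    rw [hSfun]
    exact (HasDerivAt.fun_sum (fun m _ => HasDerivAt.fun_sum (fun n _ =>
      (hasDerivAt_normsq (hfd m n t)).const_mul (p m * p n)))).const_mul (1 / Z ^ 2)
  have hderivS : deriv S = G := funext fun t => (hSd t).deriv
  constructor
  · -- first derivative
    rw [hderivS]
    have hz : ∀ m n : Fin d, p m * p n *
        (2 * ((f m n 0).re * (F1 m n 0).re + (f m n 0).im * (F1 m n 0).im)) = 0 := by
      intro m n
      rw [hf0]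
      by_cases h : m = n
      · subst h
        have h0 := hare m
        simp only [hadef] at h0
        simp [h0]
      · simp [h]
    simp only [hGdef, hz, Finset.sum_const_zero, mul_zero]
  · -- second derivative
    rw [hderivS]
    have hGd : HasDerivAt G ((1 / Z ^ 2) * ∑ m, ∑ n, p m * p n *
        (2 * ((a m n).re * (a m n).re + (f m n 0).re * (b m n).re +
          ((a m n).im * (a m n).im + (f m n 0).im * (b m n).im)))) 0 := by
      apply HasDerivAt.const_mul
      apply HasDerivAt.fun_sum; intro m _
      apply HasDerivAt.fun_sum; intro n _
      apply HasDerivAt.const_mul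
      apply HasDerivAt.const_mul
      exact ((hasDerivAt_re' (hfd m n 0)).mul (hasDerivAt_re' (hfd2 m n 0))).add
        ((hasDerivAt_im' (hfd m n 0)).mul (hasDerivAt_im' (hfd2 m n 0)))
    rw [hGd.deriv]
    -- now the sum algebra
    set Kt : Fin d → Fin d → ℝ :=
      fun m n => ‖star (v m) ⬝ᵥ V.mulVec (v n)‖^2 / (E m - E n)^2 with hKt
    have hKsym : ∀ m n, Kt m n = Kt n m := by
      intro m n
      simp only [hKt]
      have hVsym : star (star (v m) ⬝ᵥ V.mulVec (v n)) = star (v n) ⬝ᵥ V.mulVec (v m) := by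
        rw [star_dotProduct, star_star, star_mulVec, hV.eq, ← dotProduct_mulVec]
      rw [← hVsym, norm_star]
      rw [show (E n - E m)^2 = (E m - E n)^2 by ring]
    -- pointwise simplification of the second-derivative terms
    have hterm : ∀ m n : Fin d, p m * p n *
        (2 * ((a m n).re * (a m n).re + (f m n 0).re * (b m n).re +
          ((a m n).im * (a m n).im + (f m n 0).im * (b m n).im)))
        = 2 * (p m * p n) * ‖a m n‖^2 + (if m = n then 2 * p n^2 * (b n n).re else 0) := by
      intro m n
      rw [hf0, norm_sq_eq_re_im]
      by_cases h : m = n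
      · subst h
        simp only [eq_self_iff_true, if_true, Complex.one_re, Complex.one_im]
        ring
      · simp only [if_neg h, Complex.zero_re, Complex.zero_im]; ring
    -- the main sum identity
    have hsum : ∑ m, ∑ n, p m * p n *
        (2 * ((a m n).re * (a m n).re + (f m n 0).re * (b m n).re +
          ((a m n).im * (a m n).im + (f m n 0).im * (b m n).im)))
        = ∑ m, ∑ n, -(if m = n then 0 else
          (p m - p n) ^ 2 * ‖star (v m) ⬝ᵥ V.mulVec (v n)‖ ^ 2 / (E m - E n) ^ 2) := by
      -- step 1: split
      have step1 : ∀ m : Fin d, ∑ n, (p m * p n *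
          (2 * ((a m n).re * (a m n).re + (f m n 0).re * (b m n).re +
            ((a m n).im * (a m n).im + (f m n 0).im * (b m n).im))))
          = ∑ n, (2 * (p m * p n) * ‖a m n‖^2)
            + (if m ∈ (Finset.univ : Finset (Fin d)) then 2 * p m^2 * (b m m).re else 0) := by
        intro m
        rw [← Finset.sum_ite_eq (Finset.univ : Finset (Fin d)) m
          (fun n => 2 * p n^2 * (b n n).re), ← Finset.sum_add_distrib]
        exact Finset.sum_congr rfl fun n _ => hterm m n
      calc ∑ m, ∑ n, (p m * p n *
            (2 * ((a m n).re * (a m n).re + (f m n 0).re * (b m n).re +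
              ((a m n).im * (a m n).im + (f m n 0).im * (b m n).im))))
          = ∑ m, (∑ n, 2 * (p m * p n) * ‖a m n‖^2 + 2 * p m^2 * (b m m).re) := by
            refine Finset.sum_congr rfl fun m _ => ?_
            rw [step1 m]; simp
        _ = ∑ m, ∑ n, (2 * (p m * p n) * ‖a m n‖^2 - 2 * p m^2 * ‖a n m‖^2) := by
            refine Finset.sum_congr rfl fun m _ => ?_
            rw [Finset.sum_sub_distrib, hbre m, mul_neg, Finset.mul_sum]
            ring
        _ = ∑ m, ∑ n, 2 * (p m * p n) * ‖a m n‖^2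
            - ∑ m, ∑ n, 2 * p m^2 * ‖a n m‖^2 := by
            rw [← Finset.sum_sub_distrib]
            exact Finset.sum_congr rfl fun m _ => Finset.sum_sub_distrib _ _
        _ = ∑ m, ∑ n, 2 * (p m * p n) * ‖a m n‖^2
            - ∑ m, ∑ n, 2 * p n^2 * ‖a m n‖^2 := by
            congr 1
            exact Finset.sum_comm
        _ = ∑ m, ∑ n, 2 * (p m * p n - p n^2) * ‖a m n‖^2 := by
            rw [← Finset.sum_sub_distrib]
            refine Finset.sum_congr rfl fun m _ => ?_
            rw [← Finset.sum_sub_distrib]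
            refine Finset.sum_congr rfl fun n _ => ?_
            ring
        _ = ∑ m, ∑ n, (if m = n then 0 else 2 * (p m * p n - p n^2) * Kt m n) := by
            refine Finset.sum_congr rfl fun m _ => Finset.sum_congr rfl fun n _ => ?_
            by_cases h : m = n
            · subst h
              rw [if_pos rfl, show p m * p m - p m ^ 2 = 0 by ring]
              ring
            · rw [if_neg h, ha_off m n h]
        _ = ∑ m, ∑ n, -(if m = n then 0 else
              (p m - p n) ^ 2 * ‖star (v m) ⬝ᵥ V.mulVec (v n)‖ ^ 2 / (E m - E n) ^ 2) := by
            set D : Fin d → Fin d → ℝ :=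
              fun m n => if m = n then 0 else 2 * (p m * p n - p n^2) * Kt m n with hD
            set D' : Fin d → Fin d → ℝ := fun m n => -(if m = n then 0 else
              (p m - p n) ^ 2 * ‖star (v m) ⬝ᵥ V.mulVec (v n)‖ ^ 2 / (E m - E n) ^ 2) with hD'
            have hpt : ∀ m n, D m n + D n m = 2 * D' m n := by
              intro m n
              simp only [hD, hD']
              by_cases h : m = n
              · subst h; simp
              · rw [if_neg h, if_neg (Ne.symm h), if_neg h, hKsym n m]
                simp only [hKt]
                field_simp
                ring
            have hswap : ∑ m, ∑ n, D n m = ∑ m, ∑ n, D m n := Finset.sum_comm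
            have hD'sym : ∀ m n, D' m n = D' n m := by
              intro m n
              simp only [hD']
              by_cases h : m = n
              · subst h; simp
              · rw [if_neg h, if_neg (Ne.symm h)]
                have hVsym : star (star (v m) ⬝ᵥ V.mulVec (v n))
                    = star (v n) ⬝ᵥ V.mulVec (v m) := by
                  rw [star_dotProduct, star_star, star_mulVec, hV.eq, ← dotProduct_mulVec]
                rw [← hVsym, norm_star]
                rw [show (E n - E m)^2 = (E m - E n)^2 by ring,
                  show (p n - p m)^2 = (p m - p n)^2 by ring]
            have hdouble : 2 * (∑ m, ∑ n, D m n) = 2 * (∑ m, ∑ n, D' m n) := by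
              calc 2 * (∑ m, ∑ n, D m n) = ∑ m, ∑ n, D m n + ∑ m, ∑ n, D n m := by
                    rw [hswap]; ring
                _ = ∑ m, ∑ n, (D m n + D n m) := by
                    rw [← Finset.sum_add_distrib]
                    exact Finset.sum_congr rfl fun m _ => Finset.sum_add_distrib.symm
                _ = ∑ m, ∑ n, 2 * D' m n := by
                    exact Finset.sum_congr rfl fun m _ => Finset.sum_congr rfl fun n _ =>
                      hpt m n
                _ = 2 * (∑ m, ∑ n, D' m n) := by
                    rw [Finset.mul_sum]
                    exact Finset.sum_congr rfl fun m _ => (Finset.mul_sum _ _ _).symm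
            linarith
    rw [hsum]
    rw [show ∑ m, ∑ n, -(if m = n then (0:ℝ) else
        (p m - p n) ^ 2 * ‖star (v m) ⬝ᵥ V.mulVec (v n)‖ ^ 2 / (E m - E n) ^ 2)
        = -∑ m, ∑ n, (if m = n then (0:ℝ) else
        (p m - p n) ^ 2 * ‖star (v m) ⬝ᵥ V.mulVec (v n)‖ ^ 2 / (E m - E n) ^ 2) by
      rw [← Finset.sum_neg_distrib]
      exact Finset.sum_congr rfl fun m _ => Finset.sum_neg_distrib _]
    ring
end

section
/- In the periodic Ising chain with N spins (N ≥ 3), for the Gibbs weights at inverse temperature 2β with K = 2βJ, the classical sum S₁ := Σ_{s∈{±1}^N} e^{K Σᵢ sᵢs_{i+1}} · 1[s_N = s_2] · (1 − e^{−2K s₁s₂})² equals 8 sinh²K · ((2cosh K)^{N−2} + (2sinh K)^{N−2}). -/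
/-- spin value of a Boolean configuration variable: `true ↦ +1`, `false ↦ -1`. -/
def spin (b : Bool) : ℝ := if b then 1 else -1

open Fin.NatCast

noncomputable def chainSum (K : ℝ) : ℕ → Bool → Bool → ℝ
  | 0, a, b => if a = b then 1 else 0
  | n+1, a, b => ∑ c : Bool, Real.exp (K * (spin a * spin c)) * chainSum K n c b

lemma chainSum_eq (K : ℝ) : ∀ n (a b : Bool),
    chainSum K n a b
      = ((2 * Real.cosh K) ^ n + spin a * spin b * (2 * Real.sinh K) ^ n) / 2 := by
  intro n
  induction n with
  | zero => intro a b; cases a <;> cases b <;> simp [chainSum, spin]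
  | succ n ih =>
    intro a b
    simp only [chainSum, ih, Fintype.sum_bool]
    rw [Real.cosh_eq, Real.sinh_eq]
    cases a <;> cases b <;> simp [spin, pow_succ] <;> ring

lemma cast_succ_eq {m : ℕ} (i : ℕ) (h : i < m + 1) :
    ((i+1 : ℕ) : Fin (m+2)) = ((i : ℕ) : Fin (m+1)).succ := by
  rw [Fin.ext_iff, Fin.val_succ, Fin.val_natCast, Fin.val_natCast,
    Nat.mod_eq_of_lt h, Nat.mod_eq_of_lt (by omega)]

lemma hkey (K x : ℝ) (hx : x = 1 ∨ x = -1) :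
    Real.exp (K * (2*x)) * (1 - Real.exp (-(2*K)*x))^2 = 4 * Real.sinh K ^2 := by
  have h := Real.exp_ne_zero K
  rcases hx with rfl | rfl <;> rw [Real.sinh_eq]
  · rw [show K * (2*(1:ℝ)) = K + K by ring, show -(2*K)*(1:ℝ) = -K + -K by ring,
      Real.exp_add, Real.exp_add, Real.exp_neg]
    field_simp
    ring
  · rw [show K * (2*(-1:ℝ)) = -K + -K by ring, show -(2*K)*(-1:ℝ) = K + K by ring,
      Real.exp_add, Real.exp_add, Real.exp_neg]
    field_simp
    ring

lemma pathSum_eq (K : ℝ) : ∀ (m : ℕ) (a b : Bool),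
    ∑ t : Fin (m+1) → Bool,
      (if t 0 = a ∧ t (Fin.last m) = b then
        Real.exp (K * ∑ i ∈ Finset.range m,
          spin (t (i : Fin (m+1))) * spin (t ((i+1 : ℕ) : Fin (m+1)))) else 0)
      = chainSum K m a b := by
  intro m
  induction m with
  | zero =>
    intro a b
    rw [← (Equiv.funUnique (Fin 1) Bool).symm.sum_comp]
    simp only [Equiv.funUnique_symm_apply, Function.const_apply]
    simp [chainSum]
    cases a <;> cases b <;> simp <;> decide
  | succ m ih =>
    intro a b
    rw [← (Fin.consEquiv (fun _ : Fin (m+2) => Bool)).sum_comp, Fintype.sum_prod_type]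
    have hsummand : ∀ (c : Bool) (t : Fin (m+1) → Bool),
        (if (Fin.consEquiv (fun _ : Fin (m+2) => Bool)) (c, t) 0 = a ∧
            (Fin.consEquiv (fun _ : Fin (m+2) => Bool)) (c, t) (Fin.last (m+1)) = b then
          Real.exp (K * ∑ i ∈ Finset.range (m+1),
            spin ((Fin.consEquiv (fun _ : Fin (m+2) => Bool)) (c, t) (i : Fin (m+2))) *
            spin ((Fin.consEquiv (fun _ : Fin (m+2) => Bool)) (c, t) ((i+1 : ℕ) : Fin (m+2)))) else 0)
        = if c = a then
            Real.exp (K * (spin a * spin (t 0))) *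
              (if t 0 = t 0 ∧ t (Fin.last m) = b then
                Real.exp (K * ∑ i ∈ Finset.range m,
                  spin (t (i : Fin (m+1))) * spin (t ((i+1 : ℕ) : Fin (m+1)))) else 0)
          else 0 := by
      intro c t
      have h0 : (Fin.consEquiv (fun _ : Fin (m+2) => Bool)) (c, t) 0 = c := rfl
      have hlast : (Fin.consEquiv (fun _ : Fin (m+2) => Bool)) (c, t) (Fin.last (m+1))
          = t (Fin.last m) := by
        rw [show Fin.last (m+1) = (Fin.last m).succ by rw [Fin.ext_iff]; simp]
        rfl
      have hsucc : ∀ i : ℕ, i < m + 1 →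
          (Fin.consEquiv (fun _ : Fin (m+2) => Bool)) (c, t) ((i+1 : ℕ) : Fin (m+2))
            = t ((i : ℕ) : Fin (m+1)) := by
        intro i h
        rw [cast_succ_eq i h]
        rfl
      have hexp : (∑ i ∈ Finset.range (m+1),
            spin ((Fin.consEquiv (fun _ : Fin (m+2) => Bool)) (c, t) (i : Fin (m+2))) *
            spin ((Fin.consEquiv (fun _ : Fin (m+2) => Bool)) (c, t) ((i+1 : ℕ) : Fin (m+2))))
          = spin c * spin (t 0) + ∑ i ∈ Finset.range m,
              spin (t (i : Fin (m+1))) * spin (t ((i+1 : ℕ) : Fin (m+1))) := by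
        rw [Finset.sum_range_succ']
        rw [Finset.sum_congr rfl (fun i hi => by
          rw [hsucc i (by simp at hi; omega), hsucc (i+1) (by simp at hi; omega)])]
        rw [hsucc 0 (by omega)]
        norm_num [h0]
        ring
      rw [h0, hlast, hexp]
      by_cases hc : c = a
      · subst hc
        by_cases hb : t (Fin.last m) = b <;>
          simp [hb, ← Real.exp_add, mul_add, add_comm]
      · simp [hc]
    rw [Finset.sum_congr rfl (fun c _ => Finset.sum_congr rfl (fun t _ => hsummand c t))]
    have hswap : ∀ c : Bool,
        (∑ t : Fin (m+1) → Bool, if c = a then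
          Real.exp (K * (spin a * spin (t 0))) *
            (if t 0 = t 0 ∧ t (Fin.last m) = b then
              Real.exp (K * ∑ i ∈ Finset.range m,
                spin (t (i : Fin (m+1))) * spin (t ((i+1 : ℕ) : Fin (m+1)))) else 0)
          else 0)
        = if c = a then (∑ t : Fin (m+1) → Bool,
            Real.exp (K * (spin a * spin (t 0))) *
              (if t 0 = t 0 ∧ t (Fin.last m) = b then
                Real.exp (K * ∑ i ∈ Finset.range m,
                  spin (t (i : Fin (m+1))) * spin (t ((i+1 : ℕ) : Fin (m+1)))) else 0)) else 0 := by
      intro c; split_ifs <;> simp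
    rw [Finset.sum_congr rfl (fun c _ => hswap c)]
    rw [Finset.sum_ite_eq' Finset.univ a
      (fun c => ∑ t : Fin (m+1) → Bool,
        Real.exp (K * (spin a * spin (t 0))) *
          (if t 0 = t 0 ∧ t (Fin.last m) = b then
            Real.exp (K * ∑ i ∈ Finset.range m,
              spin (t (i : Fin (m+1))) * spin (t ((i+1 : ℕ) : Fin (m+1)))) else 0))]
    simp only [Finset.mem_univ, if_true, eq_self_iff_true, true_and]
    have hsplit : ∀ t : Fin (m+1) → Bool,
        Real.exp (K * (spin a * spin (t 0))) *
          (if t (Fin.last m) = b then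
            Real.exp (K * ∑ i ∈ Finset.range m,
              spin (t (i : Fin (m+1))) * spin (t ((i+1 : ℕ) : Fin (m+1)))) else 0)
        = ∑ d : Bool, Real.exp (K * (spin a * spin d)) *
            (if t 0 = d ∧ t (Fin.last m) = b then
              Real.exp (K * ∑ i ∈ Finset.range m,
                spin (t (i : Fin (m+1))) * spin (t ((i+1 : ℕ) : Fin (m+1)))) else 0) := by
      intro t
      cases ht : t 0 <;> simp [Fintype.sum_bool, ht]
    rw [Finset.sum_congr rfl (fun t _ => hsplit t), Finset.sum_comm]
    show (∑ d : Bool, ∑ t : Fin (m+1) → Bool, _) = _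
    rw [show chainSum K (m+1) a b
        = ∑ c : Bool, Real.exp (K * (spin a * spin c)) * chainSum K m c b from rfl]
    refine Finset.sum_congr rfl (fun d _ => ?_)
    rw [← Finset.mul_sum, ih d b]

theorem tfic_classical_sum (N : ℕ) [NeZero N] (hN : 3 ≤ N) (K : ℝ) :
    ∑ s : Fin N → Bool,
        (if s ((0 : Fin N) - 1) = s 1 then
          Real.exp (K * ∑ i : Fin N, spin (s i) * spin (s (i + 1)))
            * (1 - Real.exp (-(2 * K) * spin (s 0) * spin (s 1))) ^ 2
        else 0)
      = 8 * Real.sinh K ^ 2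
          * ((2 * Real.cosh K) ^ (N - 2) + (2 * Real.sinh K) ^ (N - 2)) := by
  obtain ⟨n, rfl⟩ : ∃ n, N = n + 3 := ⟨N - 3, by omega⟩
  have hsub : ((0 : Fin (n+3)) - 1) = ((n+2 : ℕ) : Fin (n+3)) := by
    rw [Fin.ext_iff, Fin.val_natCast, Nat.mod_eq_of_lt (by omega)]
    simp [Fin.sub_def]
  have hpt : ∀ s : Fin (n+3) → Bool,
      (if s ((0 : Fin (n+3)) - 1) = s 1 then
          Real.exp (K * ∑ i : Fin (n+3), spin (s i) * spin (s (i + 1)))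
            * (1 - Real.exp (-(2 * K) * spin (s 0) * spin (s 1))) ^ 2
        else 0)
      = 4 * Real.sinh K ^ 2 *
        (if s ((n+2 : ℕ) : Fin (n+3)) = s 1 then
          Real.exp (K * ∑ i ∈ Finset.range (n+1),
            spin (s ((i+1 : ℕ) : Fin (n+3))) * spin (s ((i+2 : ℕ) : Fin (n+3)))) else 0) := by
    intro s
    rw [hsub]
    by_cases h : s ((n+2 : ℕ) : Fin (n+3)) = s 1
    · rw [if_pos h, if_pos h]
      have hexp : ∑ i : Fin (n+3), spin (s i) * spin (s (i + 1))
          = ∑ i ∈ Finset.range (n+3),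
              spin (s (i : Fin (n+3))) * spin (s ((i+1 : ℕ) : Fin (n+3))) := by
        rw [← Fin.sum_univ_eq_sum_range
          (fun i : ℕ => spin (s (i : Fin (n+3))) * spin (s ((i+1 : ℕ) : Fin (n+3))))]
        refine Finset.sum_congr rfl (fun i _ => ?_)
        have h1 : ((i.val : ℕ) : Fin (n+3)) = i := Fin.cast_val_eq_self i
        have h2 : ((i.val + 1 : ℕ) : Fin (n+3)) = i + 1 := by push_cast [h1]; ring
        rw [h1, h2]
      rw [hexp, Finset.sum_range_succ, Finset.sum_range_succ']
      have hc0 : ((0 : ℕ) : Fin (n+3)) = 0 := by norm_num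
      have hc1 : ((0 + 1 : ℕ) : Fin (n+3)) = 1 := by norm_num
      have hcN : ((n + 2 + 1 : ℕ) : Fin (n+3)) = 0 := Fin.natCast_self (n+3)
      rw [hc0, hc1, hcN, h]
      have harg : K * (∑ i ∈ Finset.range (n+1),
            spin (s ((i+1 : ℕ) : Fin (n+3))) * spin (s ((i+1+1 : ℕ) : Fin (n+3)))
          + spin (s 0) * spin (s 1) + spin (s 1) * spin (s 0))
          = K * (2 * (spin (s 0) * spin (s 1))) + K * (∑ i ∈ Finset.range (n+1),
            spin (s ((i+1 : ℕ) : Fin (n+3))) * spin (s ((i+2 : ℕ) : Fin (n+3)))) := by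
        have : ∀ i : ℕ, (i+1+1 : ℕ) = (i+2 : ℕ) := fun i => by ring
        simp only [this]
        ring
      rw [harg, Real.exp_add]
      have hx : spin (s 0) * spin (s 1) = 1 ∨ spin (s 0) * spin (s 1) = -1 := by
        cases hs : s 0 <;> cases hs' : s 1 <;> simp [spin, hs, hs']
      have := hkey K (spin (s 0) * spin (s 1)) hx
      calc Real.exp (K * (2 * (spin (s 0) * spin (s 1)))) *
            Real.exp (K * ∑ i ∈ Finset.range (n+1),
              spin (s ((i+1 : ℕ) : Fin (n+3))) * spin (s ((i+2 : ℕ) : Fin (n+3)))) *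
            (1 - Real.exp (-(2 * K) * spin (s 0) * spin (s 1))) ^ 2
          = (Real.exp (K * (2 * (spin (s 0) * spin (s 1)))) *
              (1 - Real.exp (-(2 * K) * (spin (s 0) * spin (s 1)))) ^ 2) *
            Real.exp (K * ∑ i ∈ Finset.range (n+1),
              spin (s ((i+1 : ℕ) : Fin (n+3))) * spin (s ((i+2 : ℕ) : Fin (n+3)))) := by
            rw [show -(2 * K) * spin (s 0) * spin (s 1)
              = -(2 * K) * (spin (s 0) * spin (s 1)) by ring]; ring
        _ = 4 * Real.sinh K ^ 2 * Real.exp (K * ∑ i ∈ Finset.range (n+1),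
              spin (s ((i+1 : ℕ) : Fin (n+3))) * spin (s ((i+2 : ℕ) : Fin (n+3)))) := by
            rw [this]
    · rw [if_neg h, if_neg h, mul_zero]
  rw [Finset.sum_congr rfl (fun s _ => hpt s), ← Finset.mul_sum]
  have hR : ∑ s : Fin (n+3) → Bool,
      (if s ((n+2 : ℕ) : Fin (n+3)) = s 1 then
        Real.exp (K * ∑ i ∈ Finset.range (n+1),
          spin (s ((i+1 : ℕ) : Fin (n+3))) * spin (s ((i+2 : ℕ) : Fin (n+3)))) else 0)
      = 2 * ((2 * Real.cosh K) ^ (n+1) + (2 * Real.sinh K) ^ (n+1)) := by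
    rw [← (Fin.consEquiv (fun _ : Fin (n+3) => Bool)).sum_comp, Fintype.sum_prod_type]
    have hcons : ∀ (c : Bool) (t : Fin (n+2) → Bool),
        (if (Fin.consEquiv (fun _ : Fin (n+3) => Bool)) (c, t) ((n+2 : ℕ) : Fin (n+3))
            = (Fin.consEquiv (fun _ : Fin (n+3) => Bool)) (c, t) 1 then
          Real.exp (K * ∑ i ∈ Finset.range (n+1),
            spin ((Fin.consEquiv (fun _ : Fin (n+3) => Bool)) (c, t) ((i+1 : ℕ) : Fin (n+3))) *
            spin ((Fin.consEquiv (fun _ : Fin (n+3) => Bool)) (c, t) ((i+2 : ℕ) : Fin (n+3)))) else 0)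
        = (if t (Fin.last (n+1)) = t 0 then
            Real.exp (K * ∑ i ∈ Finset.range (n+1),
              spin (t (i : Fin (n+2))) * spin (t ((i+1 : ℕ) : Fin (n+2)))) else 0) := by
      intro c t
      have hs1 : ∀ i : ℕ, i < n + 2 →
          (Fin.consEquiv (fun _ : Fin (n+3) => Bool)) (c, t) ((i+1 : ℕ) : Fin (n+3))
            = t ((i : ℕ) : Fin (n+2)) := by
        intro i h
        rw [cast_succ_eq i h]
        rfl
      have hN2 : (Fin.consEquiv (fun _ : Fin (n+3) => Bool)) (c, t) ((n+2 : ℕ) : Fin (n+3))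
          = t (Fin.last (n+1)) := by
        have e : ((n+1 : ℕ) : Fin (n+2)) = Fin.last (n+1) := by
          rw [Fin.ext_iff, Fin.val_natCast, Nat.mod_eq_of_lt (by omega)]
          rfl
        exact (hs1 (n+1) (by omega)).trans (congrArg t e)
      have h1 : (Fin.consEquiv (fun _ : Fin (n+3) => Bool)) (c, t) 1 = t 0 := by
        rw [show (1 : Fin (n+3)) = ((0+1 : ℕ) : Fin (n+3)) by norm_num, hs1 0 (by omega)]
        norm_num
      have hexp2 : ∀ i ∈ Finset.range (n+1),
          spin ((Fin.consEquiv (fun _ : Fin (n+3) => Bool)) (c, t) ((i+1 : ℕ) : Fin (n+3))) *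
          spin ((Fin.consEquiv (fun _ : Fin (n+3) => Bool)) (c, t) ((i+2 : ℕ) : Fin (n+3)))
          = spin (t (i : Fin (n+2))) * spin (t ((i+1 : ℕ) : Fin (n+2))) := by
        intro i hi
        simp only [Finset.mem_range] at hi
        rw [hs1 i (by omega), show (i+2 : ℕ) = (i+1)+1 by ring, hs1 (i+1) (by omega)]
      rw [hN2, h1, Finset.sum_congr rfl hexp2]
    rw [Finset.sum_congr rfl (fun c _ => Finset.sum_congr rfl (fun t _ => hcons c t)),
      Fintype.sum_bool, ← two_mul]
    congr 1
    have hsplit2 : ∀ t : Fin (n+2) → Bool,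
        (if t (Fin.last (n+1)) = t 0 then
          Real.exp (K * ∑ i ∈ Finset.range (n+1),
            spin (t (i : Fin (n+2))) * spin (t ((i+1 : ℕ) : Fin (n+2)))) else 0)
        = ∑ a : Bool, (if t 0 = a ∧ t (Fin.last (n+1)) = a then
            Real.exp (K * ∑ i ∈ Finset.range (n+1),
              spin (t (i : Fin (n+2))) * spin (t ((i+1 : ℕ) : Fin (n+2)))) else 0) := by
      intro t
      cases ht : t (Fin.last (n+1)) <;> cases ht0 : t 0 <;> simp [Fintype.sum_bool, ht, ht0]
    rw [Finset.sum_congr rfl (fun t _ => hsplit2 t), Finset.sum_comm]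
    have : ∀ a : Bool, (∑ t : Fin (n+2) → Bool, (if t 0 = a ∧ t (Fin.last (n+1)) = a then
        Real.exp (K * ∑ i ∈ Finset.range (n+1),
          spin (t (i : Fin (n+2))) * spin (t ((i+1 : ℕ) : Fin (n+2)))) else 0))
        = chainSum K (n+1) a a := fun a => pathSum_eq K (n+1) a a
    rw [Finset.sum_congr rfl (fun a _ => this a)]
    rw [Fintype.sum_bool, chainSum_eq, chainSum_eq]
    simp [spin]
  rw [hR, show (n+3) - 2 = n + 1 from rfl]
  ring
end
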